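/- Let L be a finite lattice with a left modular maximal chain 0 = x_0 ⋖ x_1 ⋖ ... ⋖ x_n = 1. For a join-irreducible v define δ(v) = min{i : v ≤ x_i}. If y and z are join-irreducibles with δ(y) = δ(z) and y ≠ z, then y and z are incomparable. -/

import Mathlib

variable {α : Type*}

/-- An element is join-irreducible if it is not the minimum and is not a join
of two strictly smaller elements. -/
def JoinIrred [Lattice α] (a : α) : Prop :=
  ¬ IsBot a ∧ ∀ b c : α, b < a → c < a → b ⊔ c ≠ a

/-- An element is meet-irreducible if it is not the maximum and is not a meet
of two strictly larger elements. -/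
def MeetIrred [Lattice α] (a : α) : Prop :=
  ¬ IsTop a ∧ ∀ b c : α, a < b → a < c → b ⊓ c ≠ a

/-- An element `x` is left modular if `(y ⊔ x) ⊓ z = y ⊔ (x ⊓ z)` for all `y < z`. -/
def LeftModular [Lattice α] (x : α) : Prop :=
  ∀ y z : α, y < z → (y ⊔ x) ⊓ z = y ⊔ (x ⊓ z)

/-- A maximal chain `⊥ = x 0 ⋖ x 1 ⋖ ⋯ ⋖ x n = ⊤` all of whose elements are left modular. -/
def IsLMChain [Lattice α] {n : ℕ} (x : Fin (n + 1) → α) : Prop :=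
  IsBot (x 0) ∧ IsTop (x (Fin.last n)) ∧ (∀ i : Fin n, x i.castSucc ⋖ x i.succ) ∧
    ∀ i, LeftModular (x i)

/-- A finite lattice is trim if it has a left modular maximal chain of `n + 1` elements,
exactly `n` join-irreducibles and exactly `n` meet-irreducibles. -/
def Trim (α : Type*) [Lattice α] [Finite α] : Prop :=
  ∃ (n : ℕ) (x : Fin (n + 1) → α), IsLMChain x ∧
    Nat.card {v : α // JoinIrred v} = n ∧ Nat.card {v : α // MeetIrred v} = n


lemma key_aux [Lattice α] {n : ℕ} (x : Fin (n + 1) → α) (hbot : IsBot (x 0))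
    (hcov : ∀ i : Fin n, x i.castSucc ⋖ x i.succ) (hlm : ∀ i, LeftModular (x i))
    {y z : α} (hy : JoinIrred y) (hz : JoinIrred z) (j : Fin (n + 1))
    (hjy : IsLeast {i : Fin (n + 1) | y ≤ x i} j)
    (hjz : IsLeast {i : Fin (n + 1) | z ≤ x i} j)
    (hne : y ≠ z) (hle : y ≤ z) : False := by
  have hj0 : j ≠ 0 := by
    rintro rfl
    exact hy.1 fun a => hjy.1.trans (hbot a)
  obtain ⟨i, rfl⟩ : ∃ i : Fin n, j = i.succ := Fin.eq_succ_of_ne_zero hj0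
  set p := x i.castSucc with hp
  have hynp : ¬ y ≤ p := fun h => absurd (hjy.2 h) (not_le.2 (Fin.castSucc_lt_succ : i.castSucc < i.succ))
  have hznp : ¬ z ≤ p := fun h => absurd (hjz.2 h) (not_le.2 (Fin.castSucc_lt_succ : i.castSucc < i.succ))
  have hcovi := hcov i
  have hyxj : y ≤ x i.succ := hjy.1
  have hzxj : z ≤ x i.succ := hjz.1
  have hjoin : y ⊔ p = x i.succ := by
    rcases hcovi.eq_or_eq (le_sup_right) (sup_le hyxj hcovi.le) with h | h
    · exact absurd (le_sup_left.trans h.le) hynp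
    · exact h
  have hlt : y < z := lt_of_le_of_ne hle hne
  have hlmp := hlm i.castSucc y z hlt
  rw [hjoin, inf_eq_right.2 hzxj] at hlmp
  have hpz : p ⊓ z < z := lt_of_le_of_ne inf_le_right
    (fun h => hznp (h ▸ inf_le_left : z ≤ p))
  exact hz.2 y (p ⊓ z) hlt hpz hlmp.symm

/-- Two distinct join-irreducibles with the same label `δ` (the least `i` with
`v ≤ x i` along a left modular maximal chain) are incomparable. -/
theorem join_irred_same_label_incomparable [Lattice α] [Finite α] {n : ℕ}
    (x : Fin (n + 1) → α) (hx : IsLMChain x) {y z : α}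
    (hy : JoinIrred y) (hz : JoinIrred z) (j : Fin (n + 1))
    (hjy : IsLeast {i : Fin (n + 1) | y ≤ x i} j)
    (hjz : IsLeast {i : Fin (n + 1) | z ≤ x i} j)
    (hne : y ≠ z) :
    ¬ y ≤ z ∧ ¬ z ≤ y := by
  obtain ⟨hbot, -, hcov, hlm⟩ := hx
  exact ⟨fun h => key_aux x hbot hcov hlm hy hz j hjy hjz hne h,
         fun h => key_aux x hbot hcov hlm hz hy j hjz hjy hne.symm h⟩
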